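/- Let F be a finite field with q = r² elements (so r is a prime power and √q = r), and let f ∈ F[X] be a polynomial with deg f = r + 1 and |V_f| > 2. Then f is a minimal value set polynomial if and only if there exist α, β, γ ∈ F with α ≠ 0 such that f = α·(X+β)^{r+1} + γ. -/

import Mathlib

open Polynomial Finset

lemma pow_image_card {F : Type*} [Field F] [Fintype F] [DecidableEq F]
    (r : ℕ) (hr2 : 2 ≤ r) (hcard : Fintype.card F = r ^ 2) :
    (Finset.univ.image fun x : F => x ^ (r + 1)).card = r := by
  obtain ⟨s, rfl⟩ : ∃ s, r = s + 2 := ⟨r - 2, by omega⟩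
  set r := s + 2
  have hr1 : (r + 1) * (r - 1) = r ^ 2 - 1 := by
    show (s + 3) * (s + 1) = (s + 2) ^ 2 - 1
    have h1 : (s + 3) * (s + 1) = s * s + 4 * s + 3 := by ring
    have h2 : (s + 2) ^ 2 = s * s + 4 * s + 4 := by ring
    omega
  set S := Finset.univ.image fun x : F => x ^ (r + 1) with hS
  have hub : S.card ≤ r := by
    have hsub : S ⊆ insert (0 : F) ((X ^ (r - 1) - C 1 : F[X]).roots.toFinset) := by
      intro y hy
      simp only [hS, Finset.mem_image, Finset.mem_univ, true_and] at hy
      obtain ⟨x, rfl⟩ := hy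
      by_cases hx : x = 0
      · subst hx; simp [zero_pow]
      · refine Finset.mem_insert_of_mem ?_
        rw [Multiset.mem_toFinset, mem_roots']
        constructor
        · intro h
          have := congrArg (Polynomial.eval (0 : F)) h
          simp [zero_pow (by omega : r - 1 ≠ 0)] at this
        · show Polynomial.eval _ _ = 0
          have h0 : ((x ^ (r + 1)) : F) ^ (r - 1) = 1 := by
            rw [← pow_mul, hr1, ← hcard]
            exact FiniteField.pow_card_sub_one_eq_one x hx
          have h0' : ((x ^ (r + 1)) : F) ^ (s + 1) = 1 := h0
          simp [h0', h0]
    calc S.card ≤ _ := Finset.card_le_card hsub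
      _ ≤ ((X ^ (r - 1) - C 1 : F[X]).roots.toFinset).card + 1 := Finset.card_insert_le _ _
      _ ≤ Multiset.card ((X ^ (r - 1) - C 1 : F[X]).roots) + 1 := by
          exact Nat.add_le_add_right (Multiset.toFinset_card_le _) 1
      _ ≤ (X ^ (r - 1) - C 1 : F[X]).natDegree + 1 := by
          exact Nat.add_le_add_right (Polynomial.card_roots' _) 1
      _ = r := by rw [natDegree_X_pow_sub_C]; omega
  have hlb : r ≤ S.card := by
    have hfib : ∀ y ∈ S, (Finset.univ.filter fun x : F => x ^ (r + 1) = y).card ≤ r + 1 := by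
      intro y _
      have hsub : (Finset.univ.filter fun x : F => x ^ (r + 1) = y)
          ⊆ (X ^ (r + 1) - C y : F[X]).roots.toFinset := by
        intro x hx
        simp only [Finset.mem_filter, Finset.mem_univ, true_and] at hx
        rw [Multiset.mem_toFinset, mem_roots']
        refine ⟨?_, by simp [hx]⟩
        intro h
        have := congrArg Polynomial.natDegree h
        rw [natDegree_X_pow_sub_C, natDegree_zero] at this
        omega
      calc _ ≤ ((X ^ (r + 1) - C y : F[X]).roots.toFinset).card := Finset.card_le_card hsub
        _ ≤ Multiset.card ((X ^ (r + 1) - C y : F[X]).roots) := Multiset.toFinset_card_le _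
        _ ≤ (X ^ (r + 1) - C y : F[X]).natDegree := Polynomial.card_roots' _
        _ = r + 1 := natDegree_X_pow_sub_C
    have hcount : Fintype.card F ≤ S.card * (r + 1) := by
      rw [← Finset.card_univ,
        Finset.card_eq_sum_card_fiberwise
          (f := fun x : F => x ^ (r + 1)) (t := S)
          (fun x _ => Finset.mem_image_of_mem _ (Finset.mem_univ x))]
      calc _ ≤ S.card • (r + 1) := Finset.sum_le_card_nsmul _ _ _ hfib
        _ = S.card * (r + 1) := by rw [smul_eq_mul]
    by_contra h
    push_neg at h
    have h1 : S.card ≤ r - 1 := by omega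
    have h2 : S.card * (r + 1) ≤ (r - 1) * (r + 1) := Nat.mul_le_mul_right _ h1
    rw [hcard] at hcount
    have h3 : (r - 1) * (r + 1) = r ^ 2 - 1 := by rw [mul_comm]; exact hr1
    have h4 := le_trans hcount h2
    rw [h3] at h4
    have h5 : 0 < r ^ 2 := by positivity
    omega
  omega


lemma key_monic {F : Type*} [Field F] [Fintype F] [DecidableEq F]
    (p m r : ℕ) (hp : p.Prime) [CharP F p] (hm : 0 < m) (hrpm : p ^ m = r)
    (hcard : Fintype.card F = r ^ 2)
    (f : F[X]) (hf : f.Monic) (hdeg : f.natDegree = r + 1)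
    (hVcard : (Finset.univ.image fun a => f.eval a).card = r) :
    ∃ β γ : F, f = (X + C β) ^ (r + 1) + C γ := by
  haveI : Fact p.Prime := ⟨hp⟩
  have hr2 : 2 ≤ r := by
    rw [← hrpm]
    calc 2 ≤ p := hp.two_le
      _ ≤ p ^ m := Nat.le_self_pow (by omega) p
  obtain ⟨s, hs⟩ : ∃ s, r = s + 2 := ⟨r - 2, by omega⟩
  have e3 : (r - 1) * (r + 1) = r ^ 2 - 1 := by
    subst hs
    have h1 : (s + 2 - 1) * (s + 2 + 1) = s * s + 4 * s + 3 := by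
      show (s + 1) * (s + 3) = _; ring
    have h2 : (s + 2) ^ 2 = s * s + 4 * s + 4 := by ring
    omega
  have e5 : r + 2 ≤ r ^ 2 := by
    subst hs
    have h2 : (s + 2) ^ 2 = s * s + 4 * s + 4 := by ring
    omega
  have hq0 : 0 < r ^ 2 := by positivity
  -- the value set and its vanishing polynomial
  set V := (Finset.univ.image fun a => f.eval a) with hV
  set P : F[X] := ∏ v ∈ V, (X - C v) with hP
  have hPmonic : P.Monic := monic_prod_of_monic _ _ fun v _ => monic_X_sub_C v
  have hPdeg : P.natDegree = r := by
    rw [hP, natDegree_prod _ _ fun v _ => X_sub_C_ne_zero v]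
    simp [natDegree_X_sub_C]
    exact hVcard
  set Q : F[X] := P - X ^ r with hQ
  have hQdeg : Q.natDegree ≤ r - 1 := by
    rcases eq_or_ne Q 0 with h | h
    · rw [h, natDegree_zero]; omega
    · have hdlt : Q.degree < (r : ℕ) := by
        have hd : P.degree = (X ^ r : F[X]).degree := by
          rw [degree_X_pow, degree_eq_natDegree hPmonic.ne_zero, hPdeg]
        have := degree_sub_lt hd hPmonic.ne_zero (by
          rw [hPmonic.leadingCoeff, (monic_X_pow r).leadingCoeff])
        rwa [degree_eq_natDegree hPmonic.ne_zero, hPdeg] at this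
      have := (natDegree_lt_iff_degree_lt h).mpr hdlt
      omega
  have hPQ : P = Q + X ^ r := by rw [hQ]; ring
  have hcoefftop : f.coeff (r + 1) = 1 := by rw [← hdeg]; exact hf.coeff_natDegree
  set c : F := (f.coeff r) ^ r with hc
  set M : F[X] := ∑ i ∈ Finset.range r, (monomial (i * r) ((f.coeff i) ^ r) : F[X]) with hM
  -- Frobenius expansion of f ^ r
  have hfr : f ^ r = X ^ ((r + 1) * r) + C c * X ^ (r * r) + M := by
    have h1 : f ^ (p ^ m) =
        ∑ i ∈ Finset.range (r + 2), ((monomial i (f.coeff i) : F[X])) ^ (p ^ m) := by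
      conv_lhs => rw [f.as_sum_range' (r + 2) (by omega)]
      exact sum_pow_char_pow p m _ _
    rw [← hrpm, h1]
    have h2 : ∀ i, ((monomial i (f.coeff i) : F[X])) ^ (p ^ m)
        = monomial (i * r) ((f.coeff i) ^ r) := by
      intro i; rw [monomial_pow, hrpm]
    rw [Finset.sum_congr rfl fun i _ => h2 i, Finset.sum_range_succ, Finset.sum_range_succ,
      hrpm, hcoefftop, one_pow, ← hc, ← hM, X_pow_eq_monomial, C_mul_X_pow_eq_monomial]
    ring
  -- master identity
  have hWid : P.comp f = (X ^ (r ^ 2) - X) * (X ^ r + C c)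
      + (Q.comp f + M + X ^ (r + 1) + C c * X) := by
    rw [hPQ, add_comp, X_pow_comp, hfr]
    have e1 : (r + 1) * r = r ^ 2 + r := by ring
    have e2 : r * r = r ^ 2 := by ring
    rw [e1, e2, pow_add]
    ring
  -- the combination vanishes everywhere, hence is zero
  have heval : ∀ a ∈ (Finset.univ : Finset F),
      Polynomial.eval a (Q.comp f + M + X ^ (r + 1) + C c * X) = 0 := by
    intro a _
    have h1 : Polynomial.eval a (P.comp f) = 0 := by
      rw [eval_comp, hP, eval_prod]
      refine Finset.prod_eq_zero (i := Polynomial.eval a f) ?_ (by simp)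
      rw [hV]
      exact Finset.mem_image_of_mem _ (Finset.mem_univ a)
    have h2 : Polynomial.eval a ((X ^ (r ^ 2) - X : F[X]) * (X ^ r + C c)) = 0 := by
      have h3 : a ^ (r ^ 2) = a := by rw [← hcard]; exact FiniteField.pow_card a
      simp [h3]
    have h4 := congrArg (Polynomial.eval a) hWid
    rw [eval_add, h2, zero_add, h1] at h4
    exact h4.symm
  have hEzero : Q.comp f + M + X ^ (r + 1) + C c * X = 0 := by
    apply Polynomial.eq_zero_of_natDegree_lt_card_of_eval_eq_zero' _ Finset.univ heval
    rw [Finset.card_univ, hcard]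
    have hb1 : (Q.comp f).natDegree ≤ r ^ 2 - 1 := by
      rw [natDegree_comp, hdeg]
      calc Q.natDegree * (r + 1) ≤ (r - 1) * (r + 1) := Nat.mul_le_mul_right _ hQdeg
        _ = r ^ 2 - 1 := e3
    have hb2 : M.natDegree ≤ r ^ 2 - 1 := by
      rw [hM]
      apply natDegree_sum_le_of_forall_le
      intro i hi
      apply le_trans (natDegree_monomial_le _)
      have : i ≤ r - 1 := by have := Finset.mem_range.mp hi; omega
      calc i * r ≤ (r - 1) * r := Nat.mul_le_mul_right _ this
        _ ≤ (r - 1) * (r + 1) := Nat.mul_le_mul_left _ (by omega)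
        _ = r ^ 2 - 1 := e3
    have hb3 : ((X : F[X]) ^ (r + 1)).natDegree ≤ r ^ 2 - 1 := by
      rw [natDegree_X_pow]; omega
    have hb4 : (C c * X : F[X]).natDegree ≤ r ^ 2 - 1 := by
      apply le_trans (natDegree_C_mul_le _ _)
      rw [natDegree_X]; omega
    have := natDegree_add_le_of_degree_le
      (natDegree_add_le_of_degree_le (natDegree_add_le_of_degree_le hb1 hb2) hb3) hb4
    omega
  have hE : Q.comp f = -(M + X ^ (r + 1) + C c * X) := by linear_combination hEzero
  -- middle coefficients vanish
  have hmid : ∀ i, 2 ≤ i → i < r → f.coeff i = 0 := by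
    by_contra hcon
    push_neg at hcon
    obtain ⟨i0, hi2, hir, hi0⟩ := hcon
    set B := (Finset.range r).filter (fun i => 2 ≤ i ∧ f.coeff i ≠ 0) with hB
    have hBne : B.Nonempty := by
      refine ⟨i0, ?_⟩
      rw [hB, Finset.mem_filter, Finset.mem_range]
      exact ⟨hir, hi2, hi0⟩
    set j := B.max' hBne with hj
    have hjB : j ∈ B := B.max'_mem hBne
    rw [hB, Finset.mem_filter, Finset.mem_range] at hjB
    obtain ⟨hjr, hj2, hjc⟩ := hjB
    have hjmax : ∀ i, i < r → 2 ≤ i → f.coeff i ≠ 0 → i ≤ j := by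
      intro i h1 h2 h3
      apply B.le_max' i
      rw [hB, Finset.mem_filter, Finset.mem_range]
      exact ⟨h1, h2, h3⟩
    have h2r : 2 * r ≤ j * r := Nat.mul_le_mul_right _ hj2
    -- coefficient of N at j*r
    have hMc : M.coeff (j * r) = (f.coeff j) ^ r := by
      rw [hM, finset_sum_coeff]
      rw [Finset.sum_eq_single j]
      · rw [coeff_monomial, if_pos rfl]
      · intro b _ hbj
        rw [coeff_monomial, if_neg]
        intro hbeq
        exact hbj (Nat.eq_of_mul_eq_mul_right (by omega) hbeq)
      · intro hnot
        exact absurd (Finset.mem_range.mpr hjr) hnot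
    have hcoeffN : (M + X ^ (r + 1) + C c * X).coeff (j * r) = (f.coeff j) ^ r := by
      rw [coeff_add, coeff_add, hMc, coeff_X_pow, if_neg (by omega), coeff_C_mul, coeff_X,
        if_neg (by omega)]
      ring
    have hNdeg : (M + X ^ (r + 1) + C c * X).natDegree = j * r := by
      apply le_antisymm
      · have hb2 : M.natDegree ≤ j * r := by
          rw [hM]
          apply natDegree_sum_le_of_forall_le
          intro i hi
          rcases eq_or_ne (f.coeff i) 0 with h | h
          · rw [h, zero_pow (by omega), monomial_zero_right, natDegree_zero]; omega
          · apply le_trans (natDegree_monomial_le _)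
            rcases lt_or_ge i 2 with h2 | h2
            · have : i * r ≤ 1 * r := Nat.mul_le_mul_right _ (by omega)
              omega
            · exact Nat.mul_le_mul_right _ (hjmax i (Finset.mem_range.mp hi) h2 h)
        have hb3 : ((X : F[X]) ^ (r + 1)).natDegree ≤ j * r := by
          rw [natDegree_X_pow]; omega
        have hb4 : (C c * X : F[X]).natDegree ≤ j * r := by
          apply le_trans (natDegree_C_mul_le _ _); rw [natDegree_X]; omega
        exact natDegree_add_le_of_degree_le (natDegree_add_le_of_degree_le hb2 hb3) hb4
      · exact le_natDegree_of_ne_zero (by rw [hcoeffN]; exact pow_ne_zero _ hjc)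
    have hQdegN : Q.natDegree * (r + 1) = j * r := by
      have h := congrArg natDegree hE
      rwa [natDegree_comp, hdeg, natDegree_neg, hNdeg] at h
    have hdvd : (r + 1) ∣ j * r := ⟨Q.natDegree, by rw [← hQdegN]; ring⟩
    have hcop : Nat.Coprime (r + 1) r := by
      have h9 : Nat.gcd (r + 1) r = Nat.gcd 1 r := Nat.gcd_self_add_left r 1
      rw [Nat.Coprime, h9, Nat.gcd_one_left]
    have hdvdj : (r + 1) ∣ j := hcop.dvd_of_dvd_mul_right hdvd
    have := Nat.le_of_dvd (by omega) hdvdj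
    omega
  -- now f has only 4 potentially nonzero coefficients
  have hMsmall : M = monomial 0 ((f.coeff 0) ^ r) + monomial r ((f.coeff 1) ^ r) := by
    rw [hM]
    have hsub : Finset.range 2 ⊆ Finset.range r := Finset.range_subset_range.mpr (by omega)
    rw [← Finset.sum_subset hsub (by
      intro i hi h2
      rw [Finset.mem_range] at hi
      rw [Finset.mem_range] at h2
      rw [hmid i (by omega) hi, zero_pow (by omega), monomial_zero_right])]
    rw [Finset.sum_range_succ, Finset.sum_range_one]
    norm_num
  have hN'deg : (M + X ^ (r + 1) + C c * X).natDegree = r + 1 := by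
    apply le_antisymm
    · have hb2 : M.natDegree ≤ r + 1 := by
        rw [hMsmall]
        apply le_trans (natDegree_add_le _ _)
        simp only [sup_le_iff]
        exact ⟨le_trans (natDegree_monomial_le _) (by omega),
          le_trans (natDegree_monomial_le _) (by omega)⟩
      have hb3 : ((X : F[X]) ^ (r + 1)).natDegree ≤ r + 1 := by rw [natDegree_X_pow]
      have hb4 : (C c * X : F[X]).natDegree ≤ r + 1 := by
        apply le_trans (natDegree_C_mul_le _ _); rw [natDegree_X]; omega
      exact natDegree_add_le_of_degree_le (natDegree_add_le_of_degree_le hb2 hb3) hb4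
    · apply le_natDegree_of_ne_zero
      rw [coeff_add, coeff_add, hMsmall, coeff_add, coeff_monomial, if_neg (by omega),
        coeff_monomial, if_neg (by omega), coeff_X_pow, if_pos rfl, coeff_C_mul, coeff_X,
        if_neg (by omega)]
      norm_num
  have hQdeg1 : Q.natDegree = 1 := by
    have h := congrArg natDegree hE
    rw [natDegree_comp, hdeg, natDegree_neg, hN'deg] at h
    have : Q.natDegree * (r + 1) = 1 * (r + 1) := by omega
    exact Nat.eq_of_mul_eq_mul_right (by omega) this
  have hE2 : C (Q.coeff 1) * f + C (Q.coeff 0) = -(M + X ^ (r + 1) + C c * X) := by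
    rw [← hE]
    conv_rhs => rw [eq_X_add_C_of_natDegree_le_one (by omega : Q.natDegree ≤ 1)]
    simp [add_comp, mul_comp, C_comp, X_comp]
  -- coefficient at r+1 : Q.coeff 1 = -1
  have hA : Q.coeff 1 = -1 := by
    have h := congrArg (fun g : F[X] => g.coeff (r + 1)) hE2
    simp only [coeff_add, coeff_C_mul, coeff_neg, coeff_C, hMsmall, coeff_monomial,
      coeff_X_pow, coeff_X, hcoefftop, if_neg (show ¬(r + 1 = 0) by omega),
      if_neg (show ¬(0 = r + 1) by omega), if_neg (show ¬(r = r + 1) by omega),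
      if_pos (rfl : r + 1 = r + 1), if_neg (show ¬(1 = r + 1) by omega)] at h
    simpa using h
  -- coefficient at 1 : f.coeff 1 = c
  have hc1 : f.coeff 1 = c := by
    have h := congrArg (fun g : F[X] => g.coeff 1) hE2
    simp only [coeff_add, coeff_C_mul, coeff_neg, coeff_C, hMsmall, coeff_monomial,
      coeff_X_pow, coeff_X, if_neg (show ¬((1 : ℕ) = 0) by omega),
      if_neg (show ¬(0 = (1 : ℕ)) by omega), if_neg (show ¬(r = 1) by omega),
      if_neg (show ¬(1 = r + 1) by omega), if_pos (rfl : (1 : ℕ) = 1), hA] at h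
    simp only [if_pos trivial, mul_one, add_zero, zero_add, if_true] at h
    linear_combination -h
  -- the explicit form of f
  have hfform : f = X ^ (r + 1) + C (f.coeff r) * X ^ r + C (f.coeff 1) * X + C (f.coeff 0) := by
    ext n
    simp only [coeff_add, coeff_C_mul, coeff_X_pow, coeff_X, coeff_C]
    by_cases h0 : n = 0
    · subst h0
      rw [if_neg (by omega), if_neg (by omega), if_neg (by omega), if_pos rfl]
      ring
    by_cases h1 : n = 1
    · subst h1
      rw [if_neg (by omega), if_neg (by omega), if_pos rfl, if_neg (by omega)]
      ring
    by_cases hnr : n = r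
    · subst hnr
      rw [if_neg (by omega), if_pos rfl, if_neg (by omega), if_neg (by omega)]
      simp
    by_cases hnr1 : n = r + 1
    · subst hnr1
      rw [if_pos rfl, if_neg (by omega), if_neg (by omega), if_neg (by omega)]
      simpa using hcoefftop
    · rw [if_neg (by omega), if_neg (by omega), if_neg (by omega), if_neg (by omega)]
      rcases lt_or_ge n r with h | h
      · simpa using hmid n (by omega) h
      · have : r + 1 < n := by omega
        simpa using coeff_eq_zero_of_natDegree_lt (by omega : f.natDegree < n)
  refine ⟨f.coeff r, f.coeff 0 - (f.coeff r) ^ (r + 1), ?_⟩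
  have hXpow : (X + C (f.coeff r) : F[X]) ^ r = X ^ r + C ((f.coeff r) ^ r) := by
    rw [← hrpm, add_pow_char_pow, ← C_pow]
  have hCC : (C ((f.coeff r) ^ r) * C (f.coeff r) : F[X])
      + C (f.coeff 0 - (f.coeff r) ^ (r + 1)) = C (f.coeff 0) := by
    rw [← C_mul, ← pow_succ, ← C_add]
    congr 1
    ring
  rw [pow_succ, hXpow]
  conv_lhs => rw [hfform, hc1, hc]
  linear_combination -hCC

/-- Over a finite field `F` with `q = r²` elements, a polynomial of
degree `r + 1 = √q + 1` with more than 2 values is a minimal value set polynomial iff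
it has the form `α(X+β)^{r+1} + γ` with `α ≠ 0`. -/
theorem stmt2 {F : Type*} [Field F] [Fintype F] [DecidableEq F] (r : ℕ)
    (hr : IsPrimePow r) (hcard : Fintype.card F = r ^ 2)
    (f : F[X]) (hdeg : f.natDegree = r + 1)
    (hV : 2 < (Finset.univ.image fun a => f.eval a).card) :
    (Finset.univ.image fun a => f.eval a).card = (r ^ 2 - 1) / f.natDegree + 1 ↔
      ∃ α β γ : F, α ≠ 0 ∧ f = C α * (X + C β) ^ (r + 1) + C γ := by
  obtain ⟨p, m, hpp, hm, hrpm⟩ := hr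
  have hp : p.Prime := Nat.prime_iff.mpr hpp
  have hr2 : 2 ≤ r := by
    rw [← hrpm]
    calc 2 ≤ p := hp.two_le
      _ ≤ p ^ m := Nat.le_self_pow (by omega) p
  -- identify the characteristic
  have hchar : CharP F p := by
    obtain ⟨p', hc'⟩ := CharP.exists F
    haveI := hc'
    obtain ⟨n, hp', hcard'⟩ := FiniteField.card F p'
    have hdvd : p ∣ p' ^ (n : ℕ) := by
      rw [← hcard', hcard, ← hrpm, ← pow_mul]
      exact dvd_pow_self p (by positivity)
    have : p = p' := (Nat.prime_dvd_prime_iff_eq hp hp').mp (hp.dvd_of_dvd_pow hdvd)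
    rwa [this]
  haveI := hchar
  -- simplify (r² - 1)/(r + 1) + 1 = r
  have harith : (r ^ 2 - 1) / f.natDegree + 1 = r := by
    rw [hdeg]
    have h1 : r ^ 2 - 1 = (r - 1) * (r + 1) := by
      obtain ⟨s, rfl⟩ : ∃ s, r = s + 2 := ⟨r - 2, by omega⟩
      have h2 : (s + 2 - 1) * (s + 2 + 1) = s * s + 4 * s + 3 := by
        show (s + 1) * (s + 3) = _; ring
      have h3 : (s + 2) ^ 2 = s * s + 4 * s + 4 := by ring
      omega
    have h4 : (r - 1) * (r + 1) / (r + 1) = r - 1 := by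
      exact Nat.mul_div_cancel (r - 1) (by omega)
    rw [h1, h4]
    omega
  rw [harith]
  constructor
  · -- forward direction: minimal value set implies the special form
    intro hVcard
    have hf0 : f ≠ 0 := by
      intro h
      rw [h, natDegree_zero] at hdeg
      omega
    set α₀ := f.leadingCoeff with hα₀def
    have hα₀ : α₀ ≠ 0 := leadingCoeff_ne_zero.mpr hf0
    set g : F[X] := f * C α₀⁻¹ with hg
    have hgmonic : g.Monic := monic_mul_leadingCoeff_inv hf0
    have hgdeg : g.natDegree = r + 1 := by
      rw [hg, natDegree_mul_C (inv_ne_zero hα₀), hdeg]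
    have hgV : (Finset.univ.image fun a => g.eval a).card = r := by
      have h1 : (fun a : F => g.eval a) = (fun y : F => y * α₀⁻¹) ∘ (fun a : F => f.eval a) := by
        funext a
        simp [hg]
      rw [h1, ← Finset.image_image]
      rw [Finset.card_image_of_injective _ (mul_left_injective₀ (inv_ne_zero hα₀))]
      exact hVcard
    obtain ⟨β, γ, hβγ⟩ := key_monic p m r hp hm hrpm hcard g hgmonic hgdeg hgV
    refine ⟨α₀, β, α₀ * γ, hα₀, ?_⟩
    have hfg : f = g * C α₀ := by
      rw [hg, mul_assoc, ← C_mul, inv_mul_cancel₀ hα₀, C_1, mul_one]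
    rw [hfg, hβγ, C_mul]
    ring
  · -- backward direction: the special form has exactly r values
    rintro ⟨α, β, γ, hα, rfl⟩
    have h1 : (fun a : F => (C α * (X + C β) ^ (r + 1) + C γ).eval a)
        = (fun y : F => α * y + γ) ∘ (fun x : F => x ^ (r + 1)) ∘ (fun a : F => a + β) := by
      funext a
      simp
    have h2 : Finset.univ.image
          ((fun y : F => α * y + γ) ∘ ((fun x : F => x ^ (r + 1)) ∘ (fun a : F => a + β)))
        = ((Finset.univ.image (fun a : F => a + β)).image
            (fun x : F => x ^ (r + 1))).image (fun y : F => α * y + γ) := by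
      rw [Finset.image_image, Finset.image_image]
      rfl
    have h3 : Finset.univ.image (fun a : F => a + β) = Finset.univ := by
      have he : (fun a : F => a + β) = ⇑(Equiv.addRight β) := rfl
      rw [he]
      exact Finset.image_univ_equiv (Equiv.addRight β)
    have hinj : Function.Injective (fun y : F => α * y + γ) := by
      intro a b hab
      simp only [add_left_inj] at hab
      exact mul_left_cancel₀ hα hab
    rw [h1, h2, h3, Finset.card_image_of_injective _ hinj]
    exact pow_image_card r hr2 hcard
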